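/- Let P be a finite poset, n ≥ 1, 𝒥 a poset ideal of Hom(P,[n]), and ≤ᵗ a total order on 𝒥 extending the pointwise partial order. For φ ∈ 𝒥 let J_φ be the ideal generated by all m_{Γψ} with ψ ∈ 𝒥 and ψ <ᵗ φ. Then the ideal quotient J_φ : (m_{Γφ}) equals the ideal generated by the variables x_{(p,i)} with (p,i) ∈ Λφ. -/

import Mathlib

open MvPolynomial

section Aux

variable {k : Type*} [CommSemiring k] {σ P : Type*}

/-- A product of variables as a single monomial. -/
lemma prod_X_eq_monomial' [Fintype P] (f : P → σ) :
    (∏ p : P, (X (f p) : MvPolynomial σ k))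
      = monomial (∑ p : P, Finsupp.single (f p) 1) 1 := by
  classical
  induction (Finset.univ : Finset P) using Finset.induction with
  | empty => simp
  | insert _ _ h ih =>
      rw [Finset.prod_insert h, Finset.sum_insert h, ih, X, monomial_mul, one_mul]

end Aux

/-- Key combinatorial lemma: if `ψ ∈ 𝒥`, `t ψ φ`, `ψ ≠ φ`, then there is a minimal `p`
with `ψ p < φ p`, and it satisfies the `Λφ` condition. -/
lemma exists_lambda_point {P : Type*} [PartialOrder P] [Fintype P] {n : ℕ}
    (𝒥 : Set (P → Fin n))
    (h𝒥mono : ∀ φ ∈ 𝒥, Monotone φ)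
    (t : (P → Fin n) → (P → Fin n) → Prop)
    (htantisymm : ∀ φ ∈ 𝒥, ∀ ψ ∈ 𝒥, t φ ψ → t ψ φ → φ = ψ)
    (hext : ∀ φ ∈ 𝒥, ∀ ψ ∈ 𝒥, (∀ p, φ p ≤ ψ p) → t φ ψ)
    (φ : P → Fin n) (hφ : φ ∈ 𝒥)
    (ψ : P → Fin n) (hψ : ψ ∈ 𝒥) (htψφ : t ψ φ) (hne : ψ ≠ φ) :
    ∃ p : P, ψ p < φ p ∧ ∀ q : P, q < p → φ q ≤ ψ p := by
  classical
  have hS : (Finset.univ.filter fun p => ψ p < φ p).Nonempty := by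
    by_contra h
    rw [Finset.not_nonempty_iff_eq_empty, Finset.filter_eq_empty_iff] at h
    have : ∀ p, φ p ≤ ψ p := fun p => le_of_not_gt (h (Finset.mem_univ p))
    exact hne ((htantisymm φ hφ ψ hψ (hext φ hφ ψ hψ this) htψφ).symm)
  obtain ⟨p, hpmem, hpmin⟩ := Finset.exists_minimal hS
  simp only [Finset.mem_filter, Finset.mem_univ, true_and] at hpmem
  refine ⟨p, hpmem, fun q hq => ?_⟩
  have hqnot : ¬ ψ q < φ q := by
    intro h
    exact not_le_of_gt hq (hpmin (Finset.mem_filter.2 ⟨Finset.mem_univ q, h⟩) hq.le)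
  exact le_trans (le_of_not_gt hqnot) (h𝒥mono ψ hψ hq.le)

/-- For a poset ideal `𝒥` of `Hom(P,[n])`, a total order extending the pointwise order,
and `φ ∈ 𝒥`, the colon ideal `J_φ : m_{Γφ}` equals the ideal generated by the variables
`x_{(p,i)}` with `(p,i) ∈ Λφ`. -/
theorem coletterplace_colon_ideal
    (k : Type*) [Field k]
    {P : Type*} [PartialOrder P] [Fintype P]
    (n : ℕ) (hn : 1 ≤ n)
    (𝒥 : Set (P → Fin n))
    (h𝒥mono : ∀ φ ∈ 𝒥, Monotone φ)
    (h𝒥down : ∀ φ ∈ 𝒥, ∀ ψ : P → Fin n, Monotone ψ → (∀ p, ψ p ≤ φ p) → ψ ∈ 𝒥)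
    (t : (P → Fin n) → (P → Fin n) → Prop)
    (htrefl : ∀ φ ∈ 𝒥, t φ φ)
    (htantisymm : ∀ φ ∈ 𝒥, ∀ ψ ∈ 𝒥, t φ ψ → t ψ φ → φ = ψ)
    (httrans : ∀ φ ∈ 𝒥, ∀ ψ ∈ 𝒥, ∀ χ ∈ 𝒥, t φ ψ → t ψ χ → t φ χ)
    (httotal : ∀ φ ∈ 𝒥, ∀ ψ ∈ 𝒥, t φ ψ ∨ t ψ φ)
    (hext : ∀ φ ∈ 𝒥, ∀ ψ ∈ 𝒥, (∀ p, φ p ≤ ψ p) → t φ ψ)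
    (φ : P → Fin n) (hφ : φ ∈ 𝒥) :
    (Ideal.span ((fun ψ : P → Fin n => ∏ p : P, X (p, ψ p)) ''
        {ψ | ψ ∈ 𝒥 ∧ t ψ φ ∧ ψ ≠ φ})).colon
      (Ideal.span {∏ p : P, (X (p, φ p) : MvPolynomial (P × Fin n) k)})
    = Ideal.span ((fun v : P × Fin n => (X v : MvPolynomial (P × Fin n) k)) ''
        {v : P × Fin n | v.2 < φ v.1 ∧ ∀ q : P, q < v.1 → φ q ≤ v.2}) := by
  classical
  -- notation
  set D : (P → Fin n) → ((P × Fin n) →₀ ℕ) :=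
    fun ψ => ∑ p : P, Finsupp.single (p, ψ p) 1 with hD
  set S : Set (P → Fin n) := {ψ | ψ ∈ 𝒥 ∧ t ψ φ ∧ ψ ≠ φ} with hS
  have hspan : Ideal.span ((fun ψ : P → Fin n => ∏ p : P, X (p, ψ p)) '' S)
      = Ideal.span ((fun s => monomial s (1 : k)) '' (D '' S)) := by
    rw [Set.image_image]
    congr 1
    ext x
    simp only [Set.mem_image]
    constructor
    · rintro ⟨ψ, hψ, rfl⟩; exact ⟨ψ, hψ, (prod_X_eq_monomial' _).symm⟩
    · rintro ⟨ψ, hψ, rfl⟩; exact ⟨ψ, hψ, prod_X_eq_monomial' _⟩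
  have hDval : ∀ (ψ : P → Fin n) (v : P × Fin n),
      D ψ v = if v.2 = ψ v.1 then 1 else 0 := by
    intro ψ v
    rw [hD]
    rw [Finsupp.finset_sum_apply]
    rcases v with ⟨p, i⟩
    by_cases h : i = ψ p
    · subst h
      rw [Finset.sum_eq_single p]
      · simp
      · intro q _ hq
        rw [Finsupp.single_apply, if_neg]
        intro hcontra
        exact hq (congrArg Prod.fst hcontra)
      · simp
    · rw [if_neg h, Finset.sum_eq_zero]
      intro q _
      rw [Finsupp.single_apply, if_neg]
      intro hcontra
      obtain ⟨h1, h2⟩ := Prod.mk.injEq .. ▸ hcontra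
      exact h (h1 ▸ h2).symm
  -- key: membership in J_φ after multiplication by the monomial of φ
  ext f
  rw [Ideal.mem_colon_span_singleton, hspan, prod_X_eq_monomial' (fun p => (p, φ p)),
    mem_ideal_span_monomial_image, mem_ideal_span_X_image]
  constructor
  · -- hard direction
    intro hmem d hd
    have hcoeff : coeff (d + D φ) (f * monomial (D φ) (1 : k)) = coeff d f := by
      rw [coeff_mul_monomial, mul_one]
    have hsupp : d + D φ ∈ (f * monomial (D φ) (1 : k)).support := by
      rw [mem_support_iff, hcoeff]
      exact mem_support_iff.1 hd
    obtain ⟨si, hsi, hle⟩ := hmem _ hsupp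
    obtain ⟨ψ, hψS, rfl⟩ := hsi
    obtain ⟨hψ𝒥, htψφ, hne⟩ := hψS
    obtain ⟨p, hplt, hpmin⟩ := exists_lambda_point 𝒥 h𝒥mono t htantisymm hext φ hφ ψ hψ𝒥 htψφ hne
    refine ⟨(p, ψ p), ⟨hplt, fun q hq => hpmin q hq⟩, ?_⟩
    have h1 : D ψ (p, ψ p) = 1 := by rw [hDval]; simp
    have h0 : D φ (p, ψ p) = 0 := by
      rw [hDval]; simp only [ite_eq_right_iff]
      intro h; exact absurd (h ▸ hplt) (lt_irrefl _)
    have := hle (p, ψ p)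
    rw [h1, Finsupp.add_apply, h0, add_zero] at this
    omega
  · -- easy direction
    intro hmem
    -- f ∈ span of Λ-variables, so it suffices to show each generator times m_{Γφ} is in J
    have hsub : Ideal.span ((fun v : P × Fin n => (X v : MvPolynomial (P × Fin n) k)) ''
          {v : P × Fin n | v.2 < φ v.1 ∧ ∀ q : P, q < v.1 → φ q ≤ v.2})
        ≤ (Ideal.span ((fun ψ : P → Fin n => ∏ p : P, X (p, ψ p)) '' S)).colon
          (Ideal.span {∏ p : P, (X (p, φ p) : MvPolynomial (P × Fin n) k)}) := by
      rw [Ideal.span_le]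
      rintro _ ⟨⟨p, i⟩, ⟨hlt, hmin⟩, rfl⟩
      rw [SetLike.mem_coe, Ideal.mem_colon_span_singleton]
      -- define ψ := φ updated at p with value i
      set ψ : P → Fin n := Function.update φ p i with hψdef
      have hψp : ψ p = i := Function.update_self p i φ
      have hψq : ∀ q, q ≠ p → ψ q = φ q := fun q hq => Function.update_of_ne hq i φ
      have hψle : ∀ q, ψ q ≤ φ q := by
        intro q
        by_cases h : q = p
        · subst h; rw [hψp]; exact hlt.le
        · rw [hψq q h]
      have hψmono : Monotone ψ := by
        intro a b hab
        rcases eq_or_lt_of_le hab with rfl | hab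
        · exact le_rfl
        by_cases ha : a = p
        · subst ha
          rw [hψp]
          calc i ≤ φ a := hlt.le
            _ ≤ φ b := h𝒥mono φ hφ hab.le
            _ = ψ b := (hψq b (fun h => absurd (h ▸ hab) (lt_irrefl _))).symm
        · rw [hψq a ha]
          by_cases hb : b = p
          · subst hb
            rw [hψp]
            exact hmin a hab
          · rw [hψq b hb]
            exact h𝒥mono φ hφ hab.le
      have hψ𝒥 : ψ ∈ 𝒥 := h𝒥down φ hφ ψ hψmono hψle
      have hψne : ψ ≠ φ := by
        intro h
        have := congrFun h p
        rw [hψp] at this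
        exact absurd (this ▸ hlt) (lt_irrefl _)
      have hψS : ψ ∈ S := ⟨hψ𝒥, hext ψ hψ𝒥 φ hφ hψle, hψne⟩
      -- X (p,i) * ∏ X (q, φ q) = X (p, φ p) * ∏ X (q, ψ q)
      have hkey : (X (p, i) : MvPolynomial (P × Fin n) k) * ∏ q : P, X (q, φ q)
          = (∏ q : P, X (q, ψ q)) * X (p, φ p) := by
        rw [← Finset.mul_prod_erase Finset.univ _ (Finset.mem_univ p),
          ← Finset.prod_erase_mul Finset.univ _ (Finset.mem_univ p), hψp]
        have : ∀ q ∈ Finset.univ.erase p,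
            (X (q, ψ q) : MvPolynomial (P × Fin n) k) = X (q, φ q) := by
          intro q hq
          rw [hψq q (Finset.ne_of_mem_erase hq)]
        rw [Finset.prod_congr rfl this]
        ring
      rw [hkey]
      exact Ideal.mul_mem_right _ _ (Ideal.subset_span ⟨ψ, hψS, rfl⟩)
    have h2 := Ideal.mem_colon_span_singleton.1 (hsub (mem_ideal_span_X_image.2 hmem))
    rw [hspan, prod_X_eq_monomial' (fun p => (p, φ p))] at h2
    exact mem_ideal_span_monomial_image.1 h2
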